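/- arXiv:1308.1137 — 3 statements merged into one kernel-verified Lean document; each statement's English description precedes it below -/
import Mathlib

section
/- Let a : ℕ → ℂ be a sequence of complex numbers and C_k = A_{k−1} ⋯ A_1 A_0 the product of the first k Fibonacci matrices A_i = [[a_i, 1], [1, 0]]. Then for every k ≥ 2 the trace of C_k equals Ω_k(a; 0) + Ω_{k−2}(a; 1). -/
open scoped Classical

/-- A finite set of naturals can be partitioned into disjoint pairs of
consecutive integers `{m, m+1}`. -/
def ConsecPairable (S : Finset ℕ) : Prop :=
  ∃ P : Finset ℕ, (∀ m ∈ P, m + 1 ∉ P) ∧ S = P.biUnion (fun m => {m, m + 1})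

/-- `Omega a L n` is the sum, over all subsets `J` of `{L, …, L+n-1}` whose
complement can be partitioned into disjoint pairs of consecutive integers,
of the products `∏ j ∈ J, a j`. -/
noncomputable def Omega (a : ℕ → ℂ) (L n : ℕ) : ℂ :=
  ∑ J ∈ (Finset.Ico L (L + n)).powerset.filter
      (fun J => ConsecPairable (Finset.Ico L (L + n) \ J)),
    ∏ j ∈ J, a j

/-- The `i`-th Fibonacci matrix. -/
def fibMat (a : ℕ → ℂ) (i : ℕ) : Matrix (Fin 2) (Fin 2) ℂ :=
  !![a i, 1; 1, 0]

/-- The product `C n = A_{n-1} ⋯ A_1 A_0` of Fibonacci matrices. -/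
noncomputable def fibProd (a : ℕ → ℂ) : ℕ → Matrix (Fin 2) (Fin 2) ℂ
  | 0 => 1
  | n + 1 => fibMat a n * fibProd a n

lemma consecPairable_empty : ConsecPairable ∅ := ⟨∅, by simp, by simp⟩

lemma not_consecPairable_singleton (x : ℕ) : ¬ ConsecPairable {x} := by
  rintro ⟨P, hP, hS⟩
  have hx : x ∈ P.biUnion (fun m => ({m, m + 1} : Finset ℕ)) := by rw [← hS]; simp
  rw [Finset.mem_biUnion] at hx
  obtain ⟨m, hm, _⟩ := hx
  have h1 : m ∈ ({x} : Finset ℕ) := by rw [hS]; exact Finset.mem_biUnion.mpr ⟨m, hm, by simp⟩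
  have h2 : m + 1 ∈ ({x} : Finset ℕ) := by rw [hS]; exact Finset.mem_biUnion.mpr ⟨m, hm, by simp⟩
  simp at h1 h2; omega

lemma consecPairable_top {S : Finset ℕ} {t : ℕ} (h : ConsecPairable S)
    (ht : t ∈ S) (ht1 : t + 1 ∉ S) :
    ∃ s, s + 1 = t ∧ s ∈ S ∧ ConsecPairable (S \ {s, t}) := by
  obtain ⟨P, hP, rfl⟩ := h
  rw [Finset.mem_biUnion] at ht
  obtain ⟨m, hm, htm⟩ := ht
  simp only [Finset.mem_insert, Finset.mem_singleton] at htm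
  rcases htm with rfl | rfl
  · exact absurd (Finset.mem_biUnion.mpr ⟨t, hm, by simp⟩) ht1
  · refine ⟨m, rfl, Finset.mem_biUnion.mpr ⟨m, hm, by simp⟩, P.erase m, ?_, ?_⟩
    · intro m' hm' h'
      exact hP m' (Finset.mem_of_mem_erase hm') (Finset.mem_of_mem_erase h')
    · ext x
      simp only [Finset.mem_sdiff, Finset.mem_biUnion, Finset.mem_erase,
        Finset.mem_insert, Finset.mem_singleton]
      constructor
      · rintro ⟨⟨m', hm', hx⟩, hne⟩
        refine ⟨m', ⟨?_, hm'⟩, hx⟩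
        rintro rfl
        exact hne (by tauto)
      · rintro ⟨m', ⟨hne, hm'⟩, hx⟩
        refine ⟨⟨m', hm', hx⟩, ?_⟩
        rintro (h1 | h1)
        · rcases hx with h2 | h2
          · exact hne (by omega)
          · exact hP m' hm' ((show m' + 1 = m by omega) ▸ hm)
        · rcases hx with h2 | h2
          · exact hP m hm ((show m + 1 = m' by omega) ▸ hm')
          · exact hne (by omega)

lemma consecPairable_insert_pair {S : Finset ℕ} {t : ℕ} (h : ConsecPairable S)
    (ht : t ∉ S) (ht1 : t + 1 ∉ S) : ConsecPairable (S ∪ {t, t + 1}) := by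
  obtain ⟨P, hP, rfl⟩ := h
  refine ⟨insert t P, ?_, ?_⟩
  · intro m hm h'
    rcases Finset.mem_insert.mp hm with rfl | hm
    · rcases Finset.mem_insert.mp h' with h'' | h''
      · omega
      · exact ht1 (Finset.mem_biUnion.mpr ⟨m + 1, h'', by simp⟩)
    · rcases Finset.mem_insert.mp h' with h'' | h''
      · exact ht (h'' ▸ Finset.mem_biUnion.mpr ⟨m, hm, by simp⟩)
      · exact hP m hm h''
  · rw [Finset.biUnion_insert, Finset.union_comm]

lemma omega_zero (a : ℕ → ℂ) (L : ℕ) : Omega a L 0 = 1 := by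
  simp [Omega, Finset.Ico_self, consecPairable_empty]

lemma omega_one (a : ℕ → ℂ) (L : ℕ) : Omega a L 1 = a L := by
  unfold Omega
  have h1 : Finset.Ico L (L + 1) = {L} := Nat.Ico_succ_singleton L
  have hps : ({L} : Finset ℕ).powerset = {∅, {L}} := by
    ext J; simp [Finset.subset_singleton_iff]
  rw [h1, hps]
  have h2 : ({∅, {L}} : Finset (Finset ℕ)).filter
      (fun J => ConsecPairable (({L} : Finset ℕ) \ J)) = {{L}} := by
    ext J
    simp only [Finset.mem_filter, Finset.mem_insert, Finset.mem_singleton]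
    constructor
    · rintro ⟨rfl | rfl, hp⟩
      · exact absurd (by simpa using hp) (not_consecPairable_singleton L)
      · rfl
    · rintro rfl
      exact ⟨Or.inr rfl, by simpa using consecPairable_empty⟩
  rw [h2, Finset.sum_singleton, Finset.prod_singleton]

lemma omega_rec (a : ℕ → ℂ) (L n : ℕ) :
    Omega a L (n + 2) = a (L + n + 1) * Omega a L (n + 1) + Omega a L n := by
  unfold Omega
  set T := L + n + 1 with hT
  set F := (Finset.Ico L (L + (n + 2))).powerset.filter
      (fun J => ConsecPairable (Finset.Ico L (L + (n + 2)) \ J)) with hF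
  rw [← Finset.sum_filter_add_sum_filter_not F (fun J => T ∈ J)]
  have hsplit : ∀ J : Finset ℕ, T ∉ J →
      Finset.Ico L (L + (n + 2)) \ insert T J = Finset.Ico L (L + (n + 1)) \ J := by
    intro J hTJ
    ext x
    by_cases hx : x ∈ J <;>
      simp only [Finset.mem_sdiff, Finset.mem_Ico, Finset.mem_insert, hx,
        not_true, not_false_iff, and_true, and_false, or_true, or_false,
        not_or, iff_false, not_and, not_lt, hT] <;>
      constructor <;> intro h <;> first | omega | (exact fun _ => by omega) | tauto
  congr 1
  · -- T ∈ J case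
    rw [Finset.mul_sum]
    refine Finset.sum_bij' (fun J _ => J.erase T) (fun J _ => insert T J) ?_ ?_ ?_ ?_ ?_
    · intro J hJ
      simp only [hF, Finset.mem_filter, Finset.mem_powerset] at hJ
      obtain ⟨⟨hsub, hpair⟩, hTJ⟩ := hJ
      have he : insert T (J.erase T) = J := Finset.insert_erase hTJ
      simp only [Finset.mem_filter, Finset.mem_powerset]
      constructor
      · intro x hxe
        have hx1 := Finset.mem_of_mem_erase hxe
        have hx2 := (Finset.mem_erase.mp hxe).1
        have := Finset.mem_Ico.mp (hsub hx1)
        rw [Finset.mem_Ico]; omega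
      · rw [← hsplit (J.erase T) (Finset.notMem_erase T J), he]
        exact hpair
    · intro J hJ
      simp only [Finset.mem_filter, Finset.mem_powerset] at hJ
      obtain ⟨hsub, hpair⟩ := hJ
      have hTJ : T ∉ J := fun h => by
        have := Finset.mem_Ico.mp (hsub h); omega
      simp only [hF, Finset.mem_filter, Finset.mem_powerset]
      refine ⟨⟨?_, ?_⟩, Finset.mem_insert_self T J⟩
      · refine Finset.insert_subset (Finset.mem_Ico.mpr (by omega)) ?_
        exact hsub.trans (Finset.Ico_subset_Ico le_rfl (by omega))
      · rw [hsplit J hTJ]; exact hpair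
    · intro J hJ
      simp only [hF, Finset.mem_filter] at hJ
      exact Finset.insert_erase hJ.2
    · intro J hJ
      simp only [Finset.mem_filter, Finset.mem_powerset] at hJ
      have hTJ : T ∉ J := fun h => by
        have := Finset.mem_Ico.mp (hJ.1 h); omega
      exact Finset.erase_insert hTJ
    · intro J hJ
      simp only [hF, Finset.mem_filter] at hJ
      exact (Finset.mul_prod_erase J a hJ.2).symm
  · -- T ∉ J case
    have hset : F.filter (fun J => T ∉ J) =
        (Finset.Ico L (L + n)).powerset.filter
          (fun J => ConsecPairable (Finset.Ico L (L + n) \ J)) := by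
      ext J
      simp only [hF, Finset.mem_filter, Finset.mem_powerset, and_assoc]
      constructor
      · rintro ⟨hsub, hpair, hTJ⟩
        have hTmem : T ∈ Finset.Ico L (L + (n + 2)) \ J :=
          Finset.mem_sdiff.mpr ⟨Finset.mem_Ico.mpr (by omega), hTJ⟩
        have hT1 : T + 1 ∉ Finset.Ico L (L + (n + 2)) \ J := fun h => by
          have := Finset.mem_Ico.mp (Finset.mem_sdiff.mp h).1; omega
        obtain ⟨s, hs1, hsmem, hpair'⟩ := consecPairable_top hpair hTmem hT1
        have hsval : s = L + n := by omega
        subst hsval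
        have hLn : L + n ∉ J := fun h => (Finset.mem_sdiff.mp hsmem).2 h
        have hJsub : J ⊆ Finset.Ico L (L + n) := by
          intro x hxJ
          have hx := Finset.mem_Ico.mp (hsub hxJ)
          have hne1 : x ≠ T := fun h => hTJ (h ▸ hxJ)
          have hne2 : x ≠ L + n := fun h => hLn (h ▸ hxJ)
          rw [Finset.mem_Ico]; omega
        refine ⟨hJsub, ?_⟩
        have heq : (Finset.Ico L (L + (n + 2)) \ J) \ {L + n, T} =
            Finset.Ico L (L + n) \ J := by
          ext x
          by_cases hx : x ∈ J <;>
            simp only [Finset.mem_sdiff, Finset.mem_Ico, Finset.mem_insert,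
              Finset.mem_singleton, hx, not_true, not_false_iff, and_true,
              and_false, false_and, not_or, hT, iff_false] <;>
            constructor <;> intro h <;> first | omega | tauto
        rwa [heq] at hpair'
      · rintro ⟨hsub, hpair⟩
        have hTJ : T ∉ J := fun h => by
          have := Finset.mem_Ico.mp (hsub h); omega
        have hLnJ : L + n ∉ J := fun h => by
          have := Finset.mem_Ico.mp (hsub h); omega
        have hLn : L + n ∉ Finset.Ico L (L + n) \ J := fun h => by
          have := Finset.mem_Ico.mp (Finset.mem_sdiff.mp h).1; omega
        have hLn1 : L + n + 1 ∉ Finset.Ico L (L + n) \ J := fun h => by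
          have := Finset.mem_Ico.mp (Finset.mem_sdiff.mp h).1; omega
        have hp := consecPairable_insert_pair hpair hLn hLn1
        have heq : (Finset.Ico L (L + n) \ J) ∪ {L + n, L + n + 1} =
            Finset.Ico L (L + (n + 2)) \ J := by
          ext x
          by_cases hx : x ∈ J
          · have hx' := Finset.mem_Ico.mp (hsub hx)
            simp only [Finset.mem_union, Finset.mem_sdiff, Finset.mem_Ico,
              Finset.mem_insert, Finset.mem_singleton, hx, not_true, and_false,
              false_or, iff_false, not_or]
            omega
          · simp only [Finset.mem_union, Finset.mem_sdiff, Finset.mem_Ico,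
              Finset.mem_insert, Finset.mem_singleton, hx, not_false_iff, and_true]
            omega
        refine ⟨hsub.trans (Finset.Ico_subset_Ico le_rfl (by omega)), ?_, hTJ⟩
        rw [← heq]; exact hp
    rw [hset]

lemma fibProd_entries (a : ℕ → ℂ) (n : ℕ) :
    fibProd a (n + 2) =
      !![Omega a 0 (n + 2), Omega a 1 (n + 1);
         Omega a 0 (n + 1), Omega a 1 n] := by
  induction n with
  | zero =>
    show fibMat a 1 * (fibMat a 0 * 1) = _
    rw [mul_one]
    have h0 := omega_rec a 0 0
    rw [omega_one, omega_zero] at h0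
    simp only [Nat.zero_add] at h0 ⊢
    rw [fibMat, fibMat, Matrix.mul_fin_two, h0, omega_one, omega_one, omega_zero]
    norm_num [mul_comm]
  | succ m ih =>
    show fibMat a (m + 2) * fibProd a (m + 2) = _
    rw [ih, fibMat, Matrix.mul_fin_two]
    have h0 := omega_rec a 0 (m + 1)
    simp only [Nat.zero_add] at h0
    have h1 := omega_rec a 1 m
    rw [show 1 + m + 1 = m + 2 by omega] at h1
    rw [show m + 1 + 2 = m + 3 by omega] at h0
    rw [show (m + 1) + 2 = m + 3 by omega, h0, h1]
    norm_num

theorem trace_fibProd (a : ℕ → ℂ) (k : ℕ) (hk : 2 ≤ k) :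
    (fibProd a k).trace = Omega a 0 k + Omega a 1 (k - 2) := by
  obtain ⟨n, rfl⟩ : ∃ n, k = n + 2 := ⟨k - 2, by omega⟩
  rw [fibProd_entries, Matrix.trace_fin_two_of, Nat.add_sub_cancel]
end

section
/- Let k ≥ 1, let a : ℕ → ℂ be a k-periodic sequence, let x : ℕ → ℂ satisfy x_{n+2} = a_n x_{n+1} + x_n for all n ≥ 0, and let C_k be the monodromy matrix. Suppose there exist complex numbers Φ⁻, Φ⁺ and an invertible 2×2 complex matrix J such that C_k = J · diag(Φ⁻, Φ⁺) · J⁻¹. Then for every n ≥ 0: x_{nk} = (Φ⁻)ⁿ · J_{2,1} ((J⁻¹)_{1,1} x_1 + (J⁻¹)_{1,2} x_0) + (Φ⁺)ⁿ · J_{2,2} ((J⁻¹)_{2,1} x_1 + (J⁻¹)_{2,2} x_0), and x_{nk+1} = (Φ⁻)ⁿ · J_{1,1} ((J⁻¹)_{1,1} x_1 + (J⁻¹)_{1,2} x_0) + (Φ⁺)ⁿ · J_{1,2} ((J⁻¹)_{2,1} x_1 + (J⁻¹)_{2,2} x_0). -/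
lemma fibProd_add (a : ℕ → ℂ) (m : ℕ) :
    ∀ j, fibProd a (j + m) = fibProd (fun i => a (i + m)) j * fibProd a m
  | 0 => by simp [fibProd]
  | j + 1 => by
    have h : j + 1 + m = (j + m) + 1 := by ring
    rw [h, fibProd, fibProd, fibProd_add a m j, ← Matrix.mul_assoc]
    rfl

lemma fibProd_mulVec (a : ℕ → ℂ) (x : ℕ → ℂ)
    (hx : ∀ n, x (n + 2) = a n * x (n + 1) + x n) :
    ∀ m, Matrix.mulVec (fibProd a m) ![x 1, x 0] = ![x (m + 1), x m]
  | 0 => by simp [fibProd]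
  | m + 1 => by
    rw [fibProd, ← Matrix.mulVec_mulVec, fibProd_mulVec a x hx m]
    funext i
    fin_cases i <;>
      simp [fibMat, Matrix.mulVec, dotProduct, Fin.sum_univ_two, hx m]

theorem binet_formula_diagonalizable (k : ℕ) (hk : 1 ≤ k) (a : ℕ → ℂ)
    (ha : ∀ n, a (n + k) = a n) (x : ℕ → ℂ)
    (hx : ∀ n, x (n + 2) = a n * x (n + 1) + x n)
    (Φm Φp : ℂ) (J : Matrix (Fin 2) (Fin 2) ℂ) (hJ : IsUnit J.det)
    (hC : fibProd a k = J * !![Φm, 0; 0, Φp] * J⁻¹) (n : ℕ) :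
    x (n * k) =
      Φm ^ n * (J 1 0 * (J⁻¹ 0 0 * x 1 + J⁻¹ 0 1 * x 0)) +
      Φp ^ n * (J 1 1 * (J⁻¹ 1 0 * x 1 + J⁻¹ 1 1 * x 0)) ∧
    x (n * k + 1) =
      Φm ^ n * (J 0 0 * (J⁻¹ 0 0 * x 1 + J⁻¹ 0 1 * x 0)) +
      Φp ^ n * (J 0 1 * (J⁻¹ 1 0 * x 1 + J⁻¹ 1 1 * x 0)) := by
  have hper : ∀ m i, a (i + m * k) = a i := by
    intro m
    induction m with
    | zero => simp
    | succ m ih =>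
      intro i
      have h : i + (m + 1) * k = (i + m * k) + k := by ring
      rw [h, ha, ih]
  have hinv : J⁻¹ * J = 1 := Matrix.nonsing_inv_mul J hJ
  have key : ∀ m, fibProd a (m * k) = J * !![Φm ^ m, 0; 0, Φp ^ m] * J⁻¹ := by
    intro m
    induction m with
    | zero =>
      simp only [Nat.zero_mul, fibProd, pow_zero]
      have : (!![(1:ℂ), 0; 0, 1] : Matrix (Fin 2) (Fin 2) ℂ) = 1 := by
        ext i j; fin_cases i <;> fin_cases j <;> simp
      rw [this, Matrix.mul_one, Matrix.mul_nonsing_inv J hJ]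
    | succ m ih =>
      have h : (m + 1) * k = k + m * k := by ring
      rw [h, fibProd_add]
      have ha' : (fun i => a (i + m * k)) = a := funext (hper m)
      rw [ha', hC, ih]
      rw [show J * !![Φm, 0; 0, Φp] * J⁻¹ * (J * !![Φm ^ m, 0; 0, Φp ^ m] * J⁻¹)
          = J * (!![Φm, 0; 0, Φp] * ((J⁻¹ * J) * !![Φm ^ m, 0; 0, Φp ^ m])) * J⁻¹ by
        simp only [Matrix.mul_assoc], hinv, Matrix.one_mul]
      congr 2
      ext i j
      fin_cases i <;> fin_cases j <;>
        simp [Matrix.mul_apply, Fin.sum_univ_two, pow_succ] <;> ring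
  have hv := fibProd_mulVec a x hx (n * k)
  rw [key n] at hv
  have h0 := congrFun hv 1
  have h1 := congrFun hv 0
  simp only [Matrix.mulVec, dotProduct, Matrix.mul_apply, Fin.sum_univ_two,
    Matrix.cons_val', Matrix.cons_val_zero, Matrix.cons_val_one, Matrix.head_cons,
    Matrix.empty_val', Matrix.cons_val_fin_one, Matrix.head_fin_const] at h0 h1
  norm_num at h0 h1
  constructor
  · rw [← h0]; ring
  · rw [← h1]; ring
end

section
/- Let a : ℕ → ℂ be a 3-periodic sequence (a_{n+3} = a_n for all n) satisfying a_0 + a_1 + a_2 + a_0 a_1 a_2 = 0. Then every solution x : ℕ → ℂ of x_{n+2} = a_n x_{n+1} + x_n is 6-periodic: x_{n+6} = x_n for all n ≥ 0. -/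
theorem three_periodic_zero_trace_six_periodic (a : ℕ → ℂ)
    (ha : ∀ n, a (n + 3) = a n)
    (hsum : a 0 + a 1 + a 2 + a 0 * a 1 * a 2 = 0)
    (x : ℕ → ℂ) (hx : ∀ n, x (n + 2) = a n * x (n + 1) + x n) :
    ∀ n, x (n + 6) = x n := by
  have key : ∀ n, x (n + 6) = x n ∧ x (n + 7) = x (n + 1) := by
    intro n
    induction n with
    | zero =>
      have ha3 : a 3 = a 0 := ha 0
      have ha4 : a 4 = a 1 := ha 1
      have h2 := hx 0
      have h3 := hx 1
      have h4 := hx 2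
      have h5 := hx 3
      have h6 := hx 4
      have h7 := hx 5
      rw [ha3] at h5
      rw [ha4] at h6
      rw [show a 5 = a 2 from ha 2] at h7
      simp only [Nat.reduceAdd] at *
      constructor
      · rw [h6, h5, h4, h3, h2]
        linear_combination (a 1 * x 0 + (a 0 * a 1 + 1) * x 1) * hsum
      · rw [h7, h6, h5, h4, h3, h2]
        linear_combination ((a 1 * a 2 + 1) * x 0 +
          (a 0 + a 1 + a 2 + a 0 * a 1 * a 2 - a 1) * x 1) * hsum
    | succ n ih =>
      obtain ⟨h1, h2⟩ := ih
      refine ⟨h2, ?_⟩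
      have e1 : x (n + 8) = a (n + 6) * x (n + 7) + x (n + 6) := by
        have := hx (n + 6); convert this using 2 <;> ring
      have e2 : x (n + 2) = a n * x (n + 1) + x n := hx n
      have haa : a (n + 6) = a n := by
        have := ha (n + 3); have h0 := ha n
        rw [show n + 3 + 3 = n + 6 from by ring] at this
        rw [this, h0]
      have : x (n + 8) = x (n + 2) := by rw [e1, e2, haa, h1, h2]
      convert this using 2 <;> ring
  exact fun n => (key n).1
end
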